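/- arXiv:1811.04738 — 2 statements merged into one kernel-verified Lean document; each statement's English description precedes it below -/
import Mathlib

section
/- Fix L ≥ 2, with θ as defined from M_L and P_L. For every j ≥ 1, the quantity θ(j+1) − θ(j) belongs to {3, 6, −3} (as an integer). Consequently, for θ_n(k) defined by θ_n(k) = k if k ∉ S_n and θ_n(2^{q_n}·j) = 2^{q_n}·θ(j), one has θ_n(2^{q_n}·(j+1)) − θ_n(2^{q_n}·j) ≤ 3 · 2^{q_n + 1}. -/
open scoped Classical

/-- `q 0 = 0`, `q (n+1) = 3·2^(q n)` -/
def q : ℕ → ℕ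
  | 0 => 0
  | n + 1 => 3 * 2 ^ q n

/-- `S_n := {2^(q n) · j | j ≥ 1}` -/
def SN (n : ℕ) : Set ℕ := {k | ∃ j : ℕ, 1 ≤ j ∧ k = 2 ^ q n * j}

/-- `P_L := {2^p · 3^l | p ∈ ℕ, l < L − 2}` -/
def PL (L : ℕ) : Set ℕ := {m | ∃ p l : ℕ, l + 2 < L ∧ m = 2 ^ p * 3 ^ l}

/-- `M_L := {2^31 · 3 · k | k ≥ 1, k ∉ P_L}` -/
def ML (L : ℕ) : Set ℕ := {m | ∃ k : ℕ, 1 ≤ k ∧ k ∉ PL L ∧ m = 2 ^ 31 * 3 * k}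

/-- `θ(j) = 3j` if `j ∉ M_L ∪ (M_L+1)`, `3j+3` if `j ∈ M_L`, `3j−3` if `j ∈ M_L+1`. -/
noncomputable def theta (L j : ℕ) : ℕ :=
  if j ∈ ML L then 3 * j + 3
  else if j ∈ (fun m => m + 1) '' ML L then 3 * j - 3
  else 3 * j

/-- `θ_n(k) = k` if `k ∉ S_n`, and `θ_n(2^(q n)·j) = 2^(q n)·θ(j)`. -/
noncomputable def thetaN (L n k : ℕ) : ℕ :=
  if 2 ^ q n ∣ k ∧ k ≠ 0 then 2 ^ q n * theta L (k / 2 ^ q n) else k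

lemma ML_dvd {L m : ℕ} (h : m ∈ ML L) : 2 ^ 31 * 3 ∣ m := by
  obtain ⟨k, _, _, rfl⟩ := h; exact Dvd.intro k rfl

lemma ML_ge {L m : ℕ} (h : m ∈ ML L) : 2 ^ 31 * 3 ≤ m := by
  obtain ⟨k, hk, _, rfl⟩ := h
  calc 2 ^ 31 * 3 = 2 ^ 31 * 3 * 1 := by ring
  _ ≤ 2 ^ 31 * 3 * k := Nat.mul_le_mul_left _ hk

lemma not_both {L m : ℕ} (h : m ∈ ML L) (h' : m + 1 ∈ ML L) : False := by
  have hd := Nat.dvd_sub (ML_dvd h') (ML_dvd h)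
  have he : m + 1 - m = 1 := by omega
  rw [he] at hd
  exact absurd (Nat.le_of_dvd one_pos hd) (by norm_num)

lemma theta_step (L : ℕ) (j : ℕ) (hj : 1 ≤ j) :
    ((theta L (j + 1) : ℤ) - (theta L j : ℤ)) ∈ ({3, 6, -3} : Set ℤ) := by
  simp only [Set.mem_insert_iff, Set.mem_singleton_iff]
  by_cases h1 : j ∈ ML L
  · have hn : j + 1 ∉ ML L := fun h => not_both h1 h
    have him : j + 1 ∈ (fun m => m + 1) '' ML L := ⟨j, h1, rfl⟩
    have e1 : theta L (j + 1) = 3 * (j + 1) - 3 := by simp [theta, hn, him]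
    have e2 : theta L j = 3 * j + 3 := by simp [theta, h1]
    rw [e1, e2]
    have h3 : 3 ≤ 3 * (j + 1) := by omega
    right; right
    push_cast [Nat.cast_sub h3]
    ring
  · by_cases h2 : j ∈ (fun m => m + 1) '' ML L
    · obtain ⟨m, hm, hmj⟩ := h2
      simp only at hmj
      have h2' : j ∈ (fun m => m + 1) '' ML L := ⟨m, hm, hmj⟩
      have hge := ML_ge hm
      have hn1 : j + 1 ∉ ML L := by
        intro h
        have hd := Nat.dvd_sub (ML_dvd h) (ML_dvd hm)
        have he : j + 1 - m = 2 := by omega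
        rw [he] at hd
        have := Nat.le_of_dvd (by norm_num) hd
        omega
      have hn2 : j + 1 ∉ (fun m => m + 1) '' ML L := by
        rintro ⟨m', hm', hm'j⟩
        simp only at hm'j
        have hq : m' = m + 1 := by omega
        exact not_both hm (hq ▸ hm')
      have e1 : theta L (j + 1) = 3 * (j + 1) := by simp [theta, hn1, hn2]
      have e2 : theta L j = 3 * j - 3 := by simp [theta, h1, h2']
      rw [e1, e2]
      have h3 : 3 ≤ 3 * j := by omega
      right; left
      push_cast [Nat.cast_sub h3]
      ring
    · by_cases h3 : j + 1 ∈ ML L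
      · have e1 : theta L (j + 1) = 3 * (j + 1) + 3 := by simp [theta, h3]
        have e2 : theta L j = 3 * j := by simp [theta, h1, h2]
        rw [e1, e2]; right; left; push_cast; ring
      · have h4 : j + 1 ∉ (fun m => m + 1) '' ML L := by
          rintro ⟨m, hm, hmj⟩
          simp only at hmj
          have hq : m = j := by omega
          exact h1 (hq ▸ hm)
        have e1 : theta L (j + 1) = 3 * (j + 1) := by simp [theta, h3, h4]
        have e2 : theta L j = 3 * j := by simp [theta, h1, h2]
        rw [e1, e2]; left; push_cast; ring

/-- `θ(j+1) − θ(j) ∈ {3, 6, −3}`, hence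
`θ_n(2^(q n)·(j+1)) − θ_n(2^(q n)·j) ≤ 3·2^(q n + 1)`. -/
theorem stmt7 (L : ℕ) (hL : 2 ≤ L) :
    (∀ j : ℕ, 1 ≤ j →
      ((theta L (j + 1) : ℤ) - (theta L j : ℤ)) ∈ ({3, 6, -3} : Set ℤ)) ∧
    ∀ n j : ℕ, 1 ≤ j →
      ((thetaN L n (2 ^ q n * (j + 1)) : ℤ) - (thetaN L n (2 ^ q n * j) : ℤ))
        ≤ 3 * 2 ^ (q n + 1) := by
  refine ⟨theta_step L, ?_⟩
  intro n j hj
  have hp : (0:ℕ) < 2 ^ q n := Nat.pow_pos (by norm_num)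
  have e1 : thetaN L n (2 ^ q n * (j + 1)) = 2 ^ q n * theta L (j + 1) := by
    simp [thetaN, Dvd.intro _ rfl, Nat.mul_ne_zero hp.ne' (by omega : j + 1 ≠ 0),
      Nat.mul_div_cancel_left _ hp]
  have e2 : thetaN L n (2 ^ q n * j) = 2 ^ q n * theta L j := by
    simp [thetaN, Dvd.intro _ rfl, Nat.mul_ne_zero hp.ne' (by omega : j ≠ 0),
      Nat.mul_div_cancel_left _ hp]
  rw [e1, e2]
  have hs := theta_step L j hj
  have hle : ((theta L (j + 1) : ℤ) - (theta L j : ℤ)) ≤ 6 := by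
    simp only [Set.mem_insert_iff, Set.mem_singleton_iff] at hs
    rcases hs with h | h | h <;> omega
  push_cast
  have he : (2:ℤ) ^ q n * (theta L (j+1)) - 2 ^ q n * (theta L j)
      = 2 ^ q n * ((theta L (j+1) : ℤ) - theta L j) := by ring
  rw [he]
  have h2 : (0:ℤ) < 2 ^ q n := by positivity
  calc (2:ℤ) ^ q n * ((theta L (j+1) : ℤ) - theta L j) ≤ 2 ^ q n * 6 :=
        mul_le_mul_of_nonneg_left hle h2.le
  _ = 3 * 2 ^ (q n + 1) := by ring
end

section
/- For n ∈ ω define g_n: N_{t_n 0} → N_{t_n 1} ⊆ 2^ω by g_n(α)(k) = 1 if k = 2^{q_n}, and g_n(α)(k) = α(θ_n(k)) otherwise (where θ_n(k) = k if k ∉ S_n and θ_n(2^{q_n}·j) = 2^{q_n}·(2j+1), the L = 1 case). If m < n and α ∈ N_{t_n 0} is such that g_n(α) ∈ N_{t_m 0} and α ∈ N_{t_m 0}, then g_m(g_n(α)) = g_m(α). -/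
/-- The case `L = 1`: `θ_n(k) = k` if `k ∉ S_n` and `θ_n(2^(q n)·j) = 2^(q n)·(2j+1)`. -/
def thetaN1 (n k : ℕ) : ℕ :=
  if 2 ^ q n ∣ k ∧ k ≠ 0 then 2 ^ q n * (2 * (k / 2 ^ q n) + 1) else k

/-- `t n`, as a function: `ψ(n)` (the `n`-th binary sequence in the
length-lexicographic enumeration, realized as the binary digits of `n+1`
after the leading 1) followed by zeros; `t n` has length `2^(q n)`. -/
def tFun (n i : ℕ) : Bool :=
  if i < Nat.log2 (n + 1) then (n + 1).testBit (Nat.log2 (n + 1) - 1 - i) else false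

/-- `g_n(α)(k) = 1` if `k = 2^(q n)`, and `g_n(α)(k) = α(θ_n(k))` otherwise. -/
def gB (n : ℕ) (α : ℕ → Bool) : ℕ → Bool :=
  fun k => if k = 2 ^ q n then true else α (thetaN1 n k)

/-- `α ∈ N_{t_n ε}`: `α` extends `t n` (of length `2^(q n)`) followed by the bit `b`. -/
def inN (n : ℕ) (b : Bool) (α : ℕ → Bool) : Prop :=
  (∀ i, i < 2 ^ q n → α i = tFun n i) ∧ α (2 ^ q n) = b

theorem q_strictMono : StrictMono q := by
  apply strictMono_nat_of_lt_succ
  intro n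
  have h : q n < 2 ^ q n := Nat.lt_two_pow_self (n := q n)
  show q n < 3 * 2 ^ q n
  omega

/-- if `m < n`, `α ∈ N_{t_n 0}`, `α ∈ N_{t_m 0}` and
`g_n(α) ∈ N_{t_m 0}`, then `g_m(g_n(α)) = g_m(α)`. -/
theorem stmt12 (m n : ℕ) (hmn : m < n) (α : ℕ → Bool)
    (h1 : inN n false α) (h2 : inN m false α) (h3 : inN m false (gB n α)) :
    gB m (gB n α) = gB m α := by
  have hq : q m < q n := q_strictMono hmn
  have hdvd : (2 : ℕ) ^ (q m + 1) ∣ 2 ^ q n := pow_dvd_pow 2 hq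
  funext k
  show (if k = 2 ^ q m then true else gB n α (thetaN1 m k)) =
    (if k = 2 ^ q m then true else α (thetaN1 m k))
  by_cases hk : k = 2 ^ q m
  · simp [hk]
  · simp only [if_neg hk]
    by_cases hS : 2 ^ q m ∣ k ∧ k ≠ 0
    · have hθ : thetaN1 m k = 2 ^ q m * (2 * (k / 2 ^ q m) + 1) := if_pos hS
      set c : ℕ := 2 * (k / 2 ^ q m) + 1 with hc
      have hnd : ¬ (2 : ℕ) ^ q n ∣ 2 ^ q m * c := by
        intro hd
        have h2 : (2 : ℕ) ^ q m * 2 ∣ 2 ^ q m * c := by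
          rw [← pow_succ]; exact hdvd.trans hd
        have := (Nat.mul_dvd_mul_iff_left (Nat.pos_of_ne_zero (by positivity))).mp h2
        omega
      have hne : 2 ^ q m * c ≠ 2 ^ q n := fun h => hnd (h ▸ dvd_refl _)
      rw [hθ]
      show gB n α (2 ^ q m * c) = α (2 ^ q m * c)
      unfold gB thetaN1
      rw [if_neg hne, if_neg (fun h => hnd h.1)]
    · have hθ : thetaN1 m k = k := if_neg hS
      rw [hθ]
      have hkn : k ≠ 2 ^ q n := by
        intro h
        exact hS ⟨h ▸ pow_dvd_pow 2 hq.le, h ▸ (by positivity)⟩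
      have hSn : ¬ (2 ^ q n ∣ k ∧ k ≠ 0) := by
        rintro ⟨hd, h0⟩
        exact hS ⟨(pow_dvd_pow 2 hq.le).trans hd, h0⟩
      show gB n α k = α k
      unfold gB thetaN1
      rw [if_neg hkn, if_neg hSn]
end
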